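/- Let p be a prime with p \equiv 1 (mod 4), \chi_4 a character of F_p^* of order 4, \phi the quadratic character, and a_p(\lambda) := -\sum_{x \in F_p} \phi(x(x-1)(x-\lambda)). Then \sum over \lambda \ne 0,1 with \chi_4(\lambda)=1 and \phi(\lambda-1)=-1 of a_p(\lambda) equals \sum over \lambda \ne 0,1 with \phi(\lambda)=1, \chi_4(\lambda)=-1, and \phi(\lambda-1)=1 of a_p(\lambda). -/

import Mathlib

/-- The trace of Frobenius of the Legendre curve `y² = x(x-1)(x-λ)` over `𝔽_p`,
given as a character sum. -/
def apLegendre (p : ℕ) [Fact p.Prime] (lam : ZMod p) : ℤ :=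
  -∑ x : ZMod p, quadraticChar (ZMod p) (x * (x - 1) * (x - lam))

namespace Stmt12Aux

open Finset

variable {p : ℕ} [Fact p.Prime]

lemma hchar (hp : p % 4 = 1) : ringChar (ZMod p) ≠ 2 := by
  rw [ZMod.ringChar_zmod_n]; omega

lemma two_ne (hp : p % 4 = 1) : (2 : ZMod p) ≠ 0 := by
  have := Ring.two_ne_zero (hchar hp)
  simpa using this

lemma phi_neg_one (hp : p % 4 = 1) : quadraticChar (ZMod p) (-1) = 1 := by
  rw [quadraticChar_one_iff_isSquare (by simp : (-1 : ZMod p) ≠ 0)]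
  exact (ZMod.exists_sq_eq_neg_one_iff).mpr (by omega)

/-- number of square roots -/
lemma card_sq (hp : p % 4 = 1) (d : ZMod p) :
    (((univ : Finset (ZMod p)).filter fun x => x ^ 2 = d).card : ℤ) =
      1 + quadraticChar (ZMod p) d := by
  have h := quadraticChar_card_sqrts (F := ZMod p) (hchar hp) d
  have hset : {x : ZMod p | x ^ 2 = d}.toFinset =
      (univ : Finset (ZMod p)).filter fun x => x ^ 2 = d := by
    ext x; simp
  rw [hset] at h
  rw [h]; ring

/-- sum of quadratic character over a shifted line is zero -/
lemma sum_shift (hp : p % 4 = 1) (A : ZMod p) :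
    ∑ x : ZMod p, quadraticChar (ZMod p) (x + A) = 0 := by
  have := quadraticChar_sum_zero (F := ZMod p) (hchar hp)
  rw [← this]
  exact Fintype.sum_equiv (Equiv.addRight A) _ _ (fun x => rfl)

lemma sum_scale (c : ZMod p) (hc : c ≠ 0) (f : ZMod p → ℤ) :
    ∑ x : ZMod p, f (c * x) = ∑ x : ZMod p, f x :=
  Fintype.sum_bijective _ (Equiv.mulLeft₀ c hc).bijective _ _ (fun x => rfl)

/-- The key 2-isogeny character sum identity. -/
lemma isog_sum (hp : p % 4 = 1) (A B : ZMod p) (hB : B ≠ 0) :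
    ∑ x : ZMod p, quadraticChar (ZMod p) (x * (x ^ 2 + A * x + B)) =
      ∑ x : ZMod p, quadraticChar (ZMod p) (x * (x ^ 2 - 2 * A * x + (A ^ 2 - 4 * B))) := by
  set φ := quadraticChar (ZMod p)
  -- Step 1: restrict to x ≠ 0 and rewrite
  have step1 : ∑ x : ZMod p, φ (x * (x ^ 2 + A * x + B)) =
      ∑ x ∈ (univ : Finset (ZMod p)).erase 0, φ (x + B * x⁻¹ + A) := by
    rw [← Finset.add_sum_erase (univ : Finset (ZMod p))
      (fun x => φ (x * (x ^ 2 + A * x + B))) (mem_univ 0)]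
    have φ0 : φ 0 = 0 := quadraticChar_zero
    rw [show (0 : ZMod p) * (0 ^ 2 + A * 0 + B) = 0 by ring, φ0, zero_add]
    refine Finset.sum_congr rfl fun x hx => ?_
    have hx0 : x ≠ 0 := (Finset.mem_erase.mp hx).1
    have hfac : x * (x ^ 2 + A * x + B) = x ^ 2 * (x + B * x⁻¹ + A) := by
      field_simp; ring
    rw [hfac, map_mul, quadraticChar_sq_one' hx0, one_mul]
  -- Step 2: fiberwise over u = x + B/x
  have step2 : ∑ x ∈ (univ : Finset (ZMod p)).erase 0, φ (x + B * x⁻¹ + A) =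
      ∑ u : ZMod p,
        ((((univ : Finset (ZMod p)).erase 0).filter fun x => x + B * x⁻¹ = u).card : ℤ)
          * φ (u + A) := by
    rw [← Finset.sum_fiberwise_of_maps_to' (g := fun x : ZMod p => x + B * x⁻¹)
      (fun x _ => mem_univ _) (fun u => φ (u + A))]
    refine Finset.sum_congr rfl fun u _ => ?_
    rw [Finset.sum_const, nsmul_eq_mul]
  -- Step 3: the fiber card
  have step3 : ∀ u : ZMod p,
      ((((univ : Finset (ZMod p)).erase 0).filter fun x => x + B * x⁻¹ = u).card : ℤ) =
        1 + φ (u ^ 2 - 4 * B) := by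
    intro u
    have h2 : (2 : ZMod p) ≠ 0 := two_ne hp
    rw [← card_sq hp (u ^ 2 - 4 * B)]
    congr 1
    refine Finset.card_bij' (fun x _ => 2 * x - u) (fun z _ => (z + u) / 2) ?_ ?_ ?_ ?_
    · intro x hx
      obtain ⟨hx', hxu⟩ := Finset.mem_filter.mp hx
      have hx0 : x ≠ 0 := (Finset.mem_erase.mp hx').1
      have hq : x ^ 2 - u * x + B = 0 := by
        have h := hxu
        field_simp at h
        linear_combination h
      simp only [Finset.mem_filter, Finset.mem_univ, true_and]
      linear_combination (4 : ZMod p) * hq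
    · intro z hz
      have hz' : z ^ 2 = u ^ 2 - 4 * B := by
        simpa using (Finset.mem_filter.mp hz).2
      have hx0 : (z + u) / 2 ≠ 0 := by
        intro h
        rw [div_eq_zero_iff] at h
        rcases h with h | h
        · have hz2 : z = -u := by linear_combination h
          rw [hz2] at hz'
          have h4 : (2 : ZMod p) * (2 * B) = 0 := by linear_combination hz'
          rcases mul_eq_zero.mp h4 with h' | h'
          · exact h2 h'
          · rcases mul_eq_zero.mp h' with h'' | h''
            · exact h2 h''
            · exact hB h''
        · exact h2 h
      have hzu : z + u ≠ 0 := fun h => hx0 (by rw [h]; simp)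
      refine Finset.mem_filter.mpr ⟨Finset.mem_erase.mpr ⟨hx0, mem_univ _⟩, ?_⟩
      field_simp
      linear_combination hz'
    · intro x hx
      field_simp; ring
    · intro z hz
      field_simp; ring
  -- put together
  rw [step1, step2]
  have step4 : ∑ u : ZMod p,
      ((((univ : Finset (ZMod p)).erase 0).filter fun x => x + B * x⁻¹ = u).card : ℤ)
        * φ (u + A) = ∑ u : ZMod p, (1 + φ (u ^ 2 - 4 * B)) * φ (u + A) := by
    exact Finset.sum_congr rfl fun u _ => by rw [step3 u]
  rw [step4]
  have step5 : ∑ u : ZMod p, (1 + φ (u ^ 2 - 4 * B)) * φ (u + A) =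
      ∑ u : ZMod p, φ ((u ^ 2 - 4 * B) * (u + A)) := by
    simp only [add_mul, one_mul, map_mul, Finset.sum_add_distrib, sum_shift hp A, zero_add]
    rw [show ∑ x : ZMod p, φ (x + A) = 0 from sum_shift hp A, zero_add]
  rw [step5]
  refine (Fintype.sum_equiv (Equiv.subRight A) _ _ fun v => ?_).symm
  show φ (v * (v ^ 2 - 2 * A * v + (A ^ 2 - 4 * B))) = φ (((v - A) ^ 2 - 4 * B) * ((v - A) + A))
  congr 1
  ring

lemma phi_mul_sq (a c : ZMod p) (hc : c ≠ 0) :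
    quadraticChar (ZMod p) (a * c ^ 2) = quadraticChar (ZMod p) a := by
  rw [map_mul, quadraticChar_sq_one' hc, mul_one]

/-- The curve identity `a_p(t²) = a_p(((1-t)/(1+t))²)` coming from the 2-isogeny. -/
lemma ap_eq (hp : p % 4 = 1) (t : ZMod p) (ht0 : t ≠ 0) (h1 : 1 - t ≠ 0) (h2 : 1 + t ≠ 0) :
    apLegendre p (t ^ 2) = apLegendre p (((1 - t) / (1 + t)) ^ 2) := by
  set φ := quadraticChar (ZMod p) with hφ
  set μ := ((1 - t) / (1 + t)) ^ 2 with hμ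
  unfold apLegendre
  rw [← hφ, neg_inj]
  have key := isog_sum hp (-(1 + t ^ 2)) (t ^ 2) (pow_ne_zero 2 ht0)
  have hc : -(1 + t) ^ 2 ≠ 0 := neg_ne_zero.mpr (pow_ne_zero 2 h2)
  calc ∑ x : ZMod p, φ (x * (x - 1) * (x - t ^ 2))
      = ∑ x : ZMod p, φ (x * (x ^ 2 + -(1 + t ^ 2) * x + t ^ 2)) := by
        refine Finset.sum_congr rfl fun x _ => ?_
        congr 1; ring
    _ = ∑ x : ZMod p, φ (x * (x ^ 2 - 2 * -(1 + t ^ 2) * x + ((-(1 + t ^ 2)) ^ 2 - 4 * t ^ 2))) :=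
        key
    _ = ∑ x : ZMod p, φ ((-(1 + t) ^ 2 * x) * ((-(1 + t) ^ 2 * x) ^ 2
          - 2 * -(1 + t ^ 2) * (-(1 + t) ^ 2 * x) + ((-(1 + t ^ 2)) ^ 2 - 4 * t ^ 2))) :=
        (sum_scale (-(1 + t) ^ 2) hc
          (fun y => φ (y * (y ^ 2 - 2 * -(1 + t ^ 2) * y + ((-(1 + t ^ 2)) ^ 2 - 4 * t ^ 2))))).symm
    _ = ∑ x : ZMod p, φ (x * (x - 1) * (x - μ) * (-1) * ((1 + t) ^ 3) ^ 2) := by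
        refine Finset.sum_congr rfl fun x _ => ?_
        congr 1
        rw [hμ]
        field_simp
        ring
    _ = ∑ x : ZMod p, φ (x * (x - 1) * (x - μ)) := by
        refine Finset.sum_congr rfl fun x _ => ?_
        rw [phi_mul_sq _ _ (pow_ne_zero 3 h2), map_mul, phi_neg_one hp, mul_one]

/-- Summing `g(t²)` over a symmetric set of parameters `t` gives twice the sum over the
set of squares. -/
lemma sum_sq_fiber (hp : p % 4 = 1) (P Q : ZMod p → Prop) [DecidablePred P] [DecidablePred Q]
    (hPQ : ∀ t, P t → Q (t ^ 2)) (hQP : ∀ lam, Q lam → ∃ t, t ^ 2 = lam ∧ P t)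
    (hneg : ∀ t, P t → P (-t)) (h0 : ∀ t, P t → t ≠ 0) (g : ZMod p → ℤ) :
    ∑ t ∈ Finset.univ.filter P, g (t ^ 2) = 2 * ∑ lam ∈ Finset.univ.filter Q, g lam := by
  have h2 : (2 : ZMod p) ≠ 0 := two_ne hp
  rw [← Finset.sum_fiberwise_of_maps_to' (g := fun t : ZMod p => t ^ 2)
      (t := Finset.univ.filter Q)
      (fun t ht => Finset.mem_filter.mpr
        ⟨mem_univ _, hPQ t (Finset.mem_filter.mp ht).2⟩) g]
  rw [Finset.mul_sum]
  refine Finset.sum_congr rfl fun lam hlam => ?_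
  obtain ⟨t, hts, htP⟩ := hQP lam (Finset.mem_filter.mp hlam).2
  have ht0 : t ≠ 0 := h0 t htP
  have hne : t ≠ -t := by
    intro h
    have h' : (2 : ZMod p) * t = 0 := by linear_combination h
    rcases mul_eq_zero.mp h' with h'' | h''
    · exact h2 h''
    · exact ht0 h''
  have hset : (Finset.univ.filter P).filter (fun x => x ^ 2 = lam) = {t, -t} := by
    ext x
    simp only [Finset.mem_filter, Finset.mem_univ, true_and, Finset.mem_insert,
      Finset.mem_singleton]
    constructor
    · rintro ⟨hxP, hx2⟩
      have hxx : (x - t) * (x + t) = 0 := by linear_combination hx2 - hts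
      rcases mul_eq_zero.mp hxx with h | h
      · left; linear_combination h
      · right; linear_combination h
    · rintro (rfl | rfl)
      · exact ⟨htP, hts⟩
      · exact ⟨hneg t htP, by rw [neg_sq]; exact hts⟩
  rw [hset, Finset.sum_const, Finset.card_pair hne]
  push_cast [nsmul_eq_mul]
  ring

end Stmt12Aux

theorem stmt_12 (p : ℕ) [Fact p.Prime] (hp : p % 4 = 1) (χ₄ : MulChar (ZMod p) ℂ)
    (hord : orderOf χ₄ = 4)
    (hsq : χ₄ ^ 2 = (quadraticChar (ZMod p)).ringHomComp (Int.castRingHom ℂ)) :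
    ∑ lam ∈ Finset.univ.filter
        (fun lam : ZMod p =>
          lam ≠ 0 ∧ lam ≠ 1 ∧ χ₄ lam = 1 ∧ quadraticChar (ZMod p) (lam - 1) = -1),
      apLegendre p lam =
    ∑ lam ∈ Finset.univ.filter
        (fun lam : ZMod p =>
          lam ≠ 0 ∧ lam ≠ 1 ∧ quadraticChar (ZMod p) lam = 1 ∧ χ₄ lam = -1 ∧
            quadraticChar (ZMod p) (lam - 1) = 1),
      apLegendre p lam := by
  have h2 : (2 : ZMod p) ≠ 0 := Stmt12Aux.two_ne hp
  -- basic consequences of `hsq`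
  have happ : ∀ t : ZMod p,
      ((quadraticChar (ZMod p) t : ℤ) : ℂ) = χ₄ t ^ 2 := by
    intro t
    have h := congrFun (congrArg DFunLike.coe hsq) t
    rw [MulChar.pow_apply' χ₄ (by norm_num) t, MulChar.ringHomComp_apply, eq_intCast] at h
    exact h.symm
  have hχsq : ∀ t : ZMod p, χ₄ (t ^ 2) = ((quadraticChar (ZMod p) t : ℤ) : ℂ) := by
    intro t
    rw [map_pow, ← happ]
  have hφ_of_χ : ∀ (lam : ZMod p) (z : ℤ), χ₄ lam = (z : ℂ) → z ^ 2 = 1 →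
      quadraticChar (ZMod p) lam = z ^ 2 * quadraticChar (ZMod p) lam := fun _ _ _ h => by
    rw [h, one_mul]
  -- from χ₄ lam = ±1 we get the value of φ on a square root
  have hroot : ∀ (lam : ZMod p) (z : ℤ), lam ≠ 0 → χ₄ lam = (z : ℂ) →
      ∃ r : ZMod p, r ^ 2 = lam ∧ r ≠ 0 ∧ quadraticChar (ZMod p) r = z := by
    intro lam z hl0 hχ
    have hφlam : quadraticChar (ZMod p) lam = 1 := by
      have h := congrFun (congrArg DFunLike.coe hsq) lam
      rw [MulChar.pow_apply' χ₄ (by norm_num) lam, hχ, MulChar.ringHomComp_apply,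
        eq_intCast] at h
      have hz2' : z ^ 2 = quadraticChar (ZMod p) lam := by exact_mod_cast h
      rcases quadraticChar_dichotomy hl0 with h1 | h1
      · exact h1
      · exfalso
        rw [h1] at hz2'
        nlinarith [sq_nonneg z]
    obtain ⟨r, hr⟩ := (quadraticChar_one_iff_isSquare hl0).mp hφlam
    have hr2 : r ^ 2 = lam := by rw [pow_two]; exact hr.symm
    have hr0 : r ≠ 0 := by rintro rfl; exact hl0 (by rw [← hr2]; ring)
    refine ⟨r, hr2, hr0, ?_⟩
    have := hχsq r
    rw [hr2, hχ] at this
    exact_mod_cast this.symm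
  -- Step A : relate the first sum to a sum over parameters
  have eA : ∑ t ∈ Finset.univ.filter (fun t : ZMod p => t ≠ 0 ∧ 1 - t ≠ 0 ∧ 1 + t ≠ 0 ∧
        quadraticChar (ZMod p) t = 1 ∧ quadraticChar (ZMod p) (t ^ 2 - 1) = -1),
      apLegendre p (t ^ 2) =
      2 * ∑ lam ∈ Finset.univ.filter
        (fun lam : ZMod p =>
          lam ≠ 0 ∧ lam ≠ 1 ∧ χ₄ lam = 1 ∧ quadraticChar (ZMod p) (lam - 1) = -1),
        apLegendre p lam := by
    refine Stmt12Aux.sum_sq_fiber hp _ _ ?_ ?_ ?_ ?_ _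
    · rintro t ⟨ht0, ht1, ht1', hφt, hφt2⟩
      refine ⟨pow_ne_zero 2 ht0, ?_, ?_, ?_⟩
      · intro h
        have h' : (1 - t) * (1 + t) = 0 := by linear_combination -h
        rcases mul_eq_zero.mp h' with h'' | h''
        · exact ht1 h''
        · exact ht1' h''
      · rw [hχsq t, hφt]; norm_num
      · have : t ^ 2 - 1 = t ^ 2 - 1 := rfl
        convert hφt2 using 2
    · rintro lam ⟨hl0, hl1, hlχ, hlφ⟩
      obtain ⟨r, hr2, hr0, hφr⟩ := hroot lam 1 hl0 (by rw [hlχ]; norm_num)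
      refine ⟨r, hr2, hr0, ?_, ?_, hφr, ?_⟩
      · intro h
        apply hl1
        have hh : r = 1 := by linear_combination -h
        rw [← hr2, hh]; ring
      · intro h
        apply hl1
        have hh : r = -1 := by linear_combination h
        rw [← hr2, hh]; ring
      · rw [hr2]; exact hlφ
    · rintro t ⟨ht0, ht1, ht1', hφt, hφt2⟩
      refine ⟨neg_ne_zero.mpr ht0, ?_, ?_, ?_, ?_⟩
      · rw [sub_neg_eq_add]; exact ht1'
      · rw [← sub_eq_add_neg]; exact ht1
      · rw [show -t = -1 * t by ring, map_mul, Stmt12Aux.phi_neg_one hp, one_mul]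
        exact hφt
      · rw [neg_sq]; exact hφt2
    · rintro t ⟨ht0, -⟩; exact ht0
  -- Step C : relate the second sum to a sum over parameters
  have eB : ∑ s ∈ Finset.univ.filter (fun s : ZMod p => s ≠ 0 ∧ 1 - s ≠ 0 ∧ 1 + s ≠ 0 ∧
        quadraticChar (ZMod p) s = -1 ∧ quadraticChar (ZMod p) (s ^ 2 - 1) = 1),
      apLegendre p (s ^ 2) =
      2 * ∑ lam ∈ Finset.univ.filter
        (fun lam : ZMod p =>
          lam ≠ 0 ∧ lam ≠ 1 ∧ quadraticChar (ZMod p) lam = 1 ∧ χ₄ lam = -1 ∧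
            quadraticChar (ZMod p) (lam - 1) = 1),
        apLegendre p lam := by
    refine Stmt12Aux.sum_sq_fiber hp _ _ ?_ ?_ ?_ ?_ _
    · rintro s ⟨hs0, hs1, hs1', hφs, hφs2⟩
      refine ⟨pow_ne_zero 2 hs0, ?_, quadraticChar_sq_one' hs0, ?_, ?_⟩
      · intro h
        have h' : (1 - s) * (1 + s) = 0 := by linear_combination -h
        rcases mul_eq_zero.mp h' with h'' | h''
        · exact hs1 h''
        · exact hs1' h''
      · rw [hχsq s, hφs]; norm_num
      · exact hφs2
    · rintro lam ⟨hl0, hl1, hlφ, hlχ, hlφ1⟩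
      obtain ⟨r, hr2, hr0, hφr⟩ := hroot lam (-1) hl0 (by rw [hlχ]; norm_num)
      refine ⟨r, hr2, hr0, ?_, ?_, hφr, ?_⟩
      · intro h
        apply hl1
        have hh : r = 1 := by linear_combination -h
        rw [← hr2, hh]; ring
      · intro h
        apply hl1
        have hh : r = -1 := by linear_combination h
        rw [← hr2, hh]; ring
      · rw [hr2]; exact hlφ1
    · rintro s ⟨hs0, hs1, hs1', hφs, hφs2⟩
      refine ⟨neg_ne_zero.mpr hs0, ?_, ?_, ?_, ?_⟩
      · rw [sub_neg_eq_add]; exact hs1'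
      · rw [← sub_eq_add_neg]; exact hs1
      · rw [show -s = -1 * s by ring, map_mul, Stmt12Aux.phi_neg_one hp, one_mul]
        exact hφs
      · rw [neg_sq]; exact hφs2
    · rintro s ⟨hs0, -⟩; exact hs0
  -- Step B : the bridge between the two parameter sums
  have bridge : ∑ t ∈ Finset.univ.filter (fun t : ZMod p => t ≠ 0 ∧ 1 - t ≠ 0 ∧ 1 + t ≠ 0 ∧
        quadraticChar (ZMod p) t = 1 ∧ quadraticChar (ZMod p) (t ^ 2 - 1) = -1),
      apLegendre p (t ^ 2) =
      ∑ s ∈ Finset.univ.filter (fun s : ZMod p => s ≠ 0 ∧ 1 - s ≠ 0 ∧ 1 + s ≠ 0 ∧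
        quadraticChar (ZMod p) s = -1 ∧ quadraticChar (ZMod p) (s ^ 2 - 1) = 1),
      apLegendre p (s ^ 2) := by
    -- helper facts about the involution
    have move : ∀ t : ZMod p, t ≠ 0 → 1 - t ≠ 0 → 1 + t ≠ 0 →
        ((1 - t) / (1 + t) ≠ 0 ∧ 1 - (1 - t) / (1 + t) ≠ 0 ∧ 1 + (1 - t) / (1 + t) ≠ 0) ∧
        quadraticChar (ZMod p) ((1 - t) / (1 + t)) = quadraticChar (ZMod p) (t ^ 2 - 1) ∧
        quadraticChar (ZMod p) (((1 - t) / (1 + t)) ^ 2 - 1) = quadraticChar (ZMod p) t := by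
      intro t ht0 ht1 ht1'
      have hs1 : 1 - (1 - t) / (1 + t) = 2 * t / (1 + t) := by field_simp; ring
      have hs1' : 1 + (1 - t) / (1 + t) = 2 / (1 + t) := by field_simp; ring
      refine ⟨⟨div_ne_zero ht1 ht1', ?_, ?_⟩, ?_, ?_⟩
      · rw [hs1]; exact div_ne_zero (mul_ne_zero h2 ht0) ht1'
      · rw [hs1']; exact div_ne_zero h2 ht1'
      · have e1 : (1 - t) / (1 + t) = (-1 * (t ^ 2 - 1)) * ((1 + t)⁻¹) ^ 2 := by
          field_simp; ring
        rw [e1, Stmt12Aux.phi_mul_sq _ _ (inv_ne_zero ht1'), map_mul,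
          Stmt12Aux.phi_neg_one hp, one_mul]
      · have e2 : ((1 - t) / (1 + t)) ^ 2 - 1 = (-1 * t) * (2 * (1 + t)⁻¹) ^ 2 := by
          field_simp; ring
        rw [e2, Stmt12Aux.phi_mul_sq _ _ (mul_ne_zero h2 (inv_ne_zero ht1')), map_mul,
          Stmt12Aux.phi_neg_one hp, one_mul]
    have invol : ∀ t : ZMod p, 1 + t ≠ 0 →
        (1 - (1 - t) / (1 + t)) / (1 + (1 - t) / (1 + t)) = t := by
      intro t ht1'
      have hs1 : 1 - (1 - t) / (1 + t) = 2 * t / (1 + t) := by field_simp; ring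
      have hs1' : 1 + (1 - t) / (1 + t) = 2 / (1 + t) := by field_simp; ring
      rw [hs1, hs1']
      field_simp
    refine Finset.sum_nbij' (fun t => (1 - t) / (1 + t)) (fun s => (1 - s) / (1 + s))
      ?_ ?_ ?_ ?_ ?_
    · intro t ht
      obtain ⟨-, ht0, ht1, ht1', hφt, hφt2⟩ := Finset.mem_filter.mp ht
      obtain ⟨⟨m0, m1, m1'⟩, mφ, mφ2⟩ := move t ht0 ht1 ht1'
      exact Finset.mem_filter.mpr ⟨Finset.mem_univ _,
        m0, m1, m1', by rw [mφ]; exact hφt2, by rw [mφ2]; exact hφt⟩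
    · intro s hs
      obtain ⟨-, hs0, hs1, hs1', hφs, hφs2⟩ := Finset.mem_filter.mp hs
      obtain ⟨⟨m0, m1, m1'⟩, mφ, mφ2⟩ := move s hs0 hs1 hs1'
      exact Finset.mem_filter.mpr ⟨Finset.mem_univ _,
        m0, m1, m1', by rw [mφ]; exact hφs2, by rw [mφ2]; exact hφs⟩
    · intro t ht
      have ht1' : 1 + t ≠ 0 := (Finset.mem_filter.mp ht).2.2.2.1
      exact invol t ht1'
    · intro s hs
      have hs1' : 1 + s ≠ 0 := (Finset.mem_filter.mp hs).2.2.2.1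
      exact invol s hs1'
    · intro t ht
      obtain ⟨-, ht0, ht1, ht1', -, -⟩ := Finset.mem_filter.mp ht
      exact Stmt12Aux.ap_eq hp t ht0 ht1 ht1'
  linarith [eA, eB, bridge]
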